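/- Feasibility theorem (IF direction): Let TL be a finite set of time layers partitioned among DRRs, with each DRR's layers linearly ordered, and let CO : TL → ℕ be an injective configuration order that is increasing along each DRR's layer sequence. Define the lifetime of layer t as the half-open interval [CO(t), CO(next(t))) where next(t) is the next layer in the same DRR (lifetime extends to ∞ for the last layer of a DRR). Suppose there is a backward dependence (t₁, t₂) ∈ E_LTG with CO(t₁) > CO(t₂) and disjoint lifetimes, i.e., CO(next(t₂)) < CO(t₁). Then the reconfiguration constraint graph RCG contains a directed cycle. -/

import Mathlib

/-- The reconfiguration constraint graph: vertices are time layers (`Sum.inl`)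
and tasks (`Sum.inr`).  Edges: `E_cr` (configuration order between layers),
`E_ce` (a layer to the tasks it contains), `E_ec` (a task to the layer
immediately following its own layer in the same DRR), and `E_TG` (task
dependencies). -/
def RCGedge {TL M : Type*} (CO : TL → ℕ) (tl : M → TL) (next : TL → Option TL)
    (Etg : M → M → Prop) : (TL ⊕ M) → (TL ⊕ M) → Prop
  | Sum.inl t, Sum.inl t' => CO t < CO t'
  | Sum.inl t, Sum.inr m => tl m = t
  | Sum.inr m, Sum.inl t' => next (tl m) = some t'
  | Sum.inr m, Sum.inr m' => Etg m m'

/-- Feasibility theorem (IF direction): if there is a backward dependence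
between time layers whose lifetimes are disjoint (`CO (next t₂) < CO t₁`),
then the reconfiguration constraint graph contains a directed cycle. -/
theorem stmt_4 {TL M D : Type*} [Finite TL] [Finite M]
    (CO : TL → ℕ) (hCO : Function.Injective CO)
    (drr : TL → D) (next : TL → Option TL)
    (hnext : ∀ t t', next t = some t' →
      drr t' = drr t ∧ CO t < CO t' ∧
        ∀ t'', drr t'' = drr t → ¬ (CO t < CO t'' ∧ CO t'' < CO t'))
    (hlast : ∀ t, next t = none → ∀ t'', drr t'' = drr t → CO t'' ≤ CO t)
    (tl : M → TL) (Etg : M → M → Prop)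
    (hacyc : ∀ m : M, ¬ Relation.TransGen Etg m m)
    -- backward dependence between layers with disjoint lifetimes:
    (t₁ t₂ : TL) (m₁ m₂ : M)
    (hm₁ : tl m₁ = t₁) (hm₂ : tl m₂ = t₂)
    (hdep : Relation.TransGen Etg m₁ m₂)
    (hback : CO t₂ < CO t₁)
    (t₂' : TL) (ht₂' : next t₂ = some t₂') (hnol : CO t₂' < CO t₁) :
    ∃ v : TL ⊕ M, Relation.TransGen (RCGedge CO tl next Etg) v v := by
  refine ⟨Sum.inl t₁, ?_⟩
  have h1 : RCGedge CO tl next Etg (Sum.inl t₁) (Sum.inr m₁) := hm₁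
  have h2 : Relation.TransGen (RCGedge CO tl next Etg) (Sum.inr m₁) (Sum.inr m₂) :=
    Relation.TransGen.lift (r := Etg) Sum.inr (fun a b h => h) _ _ hdep
  have h3 : RCGedge CO tl next Etg (Sum.inr m₂) (Sum.inl t₂') := by
    show next (tl m₂) = some t₂'
    rw [hm₂]; exact ht₂'
  have h4 : RCGedge CO tl next Etg (Sum.inl t₂') (Sum.inl t₁) := hnol
  exact ((Relation.TransGen.head h1 h2).tail h3).tail h4
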